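/- arXiv:2007.03770 — 3 statements merged into one kernel-verified Lean document; each statement's English description precedes it below -/
import Mathlib

section
/- Under assumption (A1) (T_{−y}∘Q[φ] ≥ Q∘T_{−y}[φ] for y ≥ 0) and (A2) (Q is monotone on order intervals C_r), the maps Q₋[φ](θ,x) := lim_{y→−∞} (T_{−y}∘Q∘T_y)[φ](θ,x) and Q₊[φ](θ,x) := lim_{y→+∞} (T_{−y}∘Q∘T_y)[φ](θ,x) exist pointwise and satisfy: (i) T_y[Q±[φ]] = Q±[T_y[φ]] for all y ∈ ℝ and φ ∈ C₊ (translation invariance), and (ii) Q±[φ] ≤ Q±[ψ] pointwise whenever φ ≤ ψ in C₊ (monotonicity). -/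
open Filter Topology

/-- Spatial translation operator: `(Tr y φ)(θ, x) = φ(θ, x - y)`. -/
def Tr {M E : Type*} (y : ℝ) (φ : M × ℝ → E) : M × ℝ → E := fun p => φ (p.1, p.2 - y)

/-- Membership in the cone `C₊`: nonnegative and bounded above. -/
def Cpos {M : Type*} {N : ℕ} (φ : M × ℝ → Fin N → ℝ) : Prop :=
  0 ≤ φ ∧ ∃ b : ℝ, ∀ p i, φ p i ≤ b

/-- Under (A1) and (A2), the pointwise limits `Q₋` (as `y → -∞`) and `Q₊` (as `y → +∞`)
of `T_{-y} ∘ Q ∘ T_y` exist, commute with all spatial translations, and are monotone. -/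
theorem stmt1 {M : Type*} [TopologicalSpace M] [CompactSpace M] {N : ℕ}
    (Q : (M × ℝ → Fin N → ℝ) → (M × ℝ → Fin N → ℝ))
    (hQmem : ∀ φ, Cpos φ → Cpos (Q φ))
    (hA1 : ∀ φ : M × ℝ → Fin N → ℝ, Cpos φ →
      ∀ y : ℝ, 0 ≤ y → Q (Tr (-y) φ) ≤ Tr (-y) (Q φ))
    (hA2 : ∀ r : Fin N → ℝ, (∀ i, 0 < r i) →
      ∀ φ ψ : M × ℝ → Fin N → ℝ, 0 ≤ φ → φ ≤ ψ → (∀ p, ψ p ≤ r) → Q φ ≤ Q ψ) :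
    ∃ Qm Qp : (M × ℝ → Fin N → ℝ) → (M × ℝ → Fin N → ℝ),
      (∀ φ, Cpos φ → ∀ θ x, Tendsto (fun y : ℝ => Tr (-y) (Q (Tr y φ)) (θ, x))
        atBot (nhds (Qm φ (θ, x)))) ∧
      (∀ φ, Cpos φ → ∀ θ x, Tendsto (fun y : ℝ => Tr (-y) (Q (Tr y φ)) (θ, x))
        atTop (nhds (Qp φ (θ, x)))) ∧
      (∀ y : ℝ, ∀ φ, Cpos φ → Tr y (Qm φ) = Qm (Tr y φ) ∧ Tr y (Qp φ) = Qp (Tr y φ)) ∧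
      (∀ φ ψ, Cpos φ → Cpos ψ → φ ≤ ψ → Qm φ ≤ Qm ψ ∧ Qp φ ≤ Qp ψ) := by
  classical
  set S : ℝ → (M × ℝ → Fin N → ℝ) → (M × ℝ → Fin N → ℝ) :=
    fun y φ => Tr (-y) (Q (Tr y φ)) with hSdef
  -- basic facts about Tr
  have hTrTr : ∀ (a b : ℝ) (φ : M × ℝ → Fin N → ℝ), Tr a (Tr b φ) = Tr (a + b) φ := by
    intro a b φ; funext p; simp [Tr, sub_sub]
  have hTrmono : ∀ (a : ℝ) (φ ψ : M × ℝ → Fin N → ℝ), φ ≤ ψ → Tr a φ ≤ Tr a ψ := by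
    intro a φ ψ h p; exact h _
  have hTrCpos : ∀ (a : ℝ) (φ : M × ℝ → Fin N → ℝ), Cpos φ → Cpos (Tr a φ) := by
    rintro a φ ⟨h0, b, hb⟩
    exact ⟨fun p => h0 (p.1, p.2 - a), b, fun p i => hb _ i⟩
  -- S is monotone in y
  have hSmono : ∀ φ, Cpos φ → ∀ y y' : ℝ, y ≤ y' → S y φ ≤ S y' φ := by
    intro φ hφ y y' hyy'
    have h1 := hA1 (Tr y' φ) (hTrCpos _ _ hφ) (y' - y) (by linarith)
    rw [hTrTr] at h1
    have e1 : -(y' - y) + y' = y := by ring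
    rw [e1] at h1
    have h2 := hTrmono (-y) _ _ h1
    rw [hTrTr] at h2
    have e2 : -y + -(y' - y) = -y' := by ring
    rw [e2] at h2
    exact h2
  -- S is nonnegative
  have hSnonneg : ∀ φ, Cpos φ → ∀ y p i, 0 ≤ S y φ p i := by
    intro φ hφ y p i
    exact (hQmem _ (hTrCpos y φ hφ)).1 _ i
  -- S is uniformly bounded above
  have hSbdd : ∀ φ, Cpos φ → ∃ B : ℝ, ∀ y p i, S y φ p i ≤ B := by
    rintro φ ⟨h0, b, hb⟩
    set c : ℝ := max b 0 with hc
    have hc0 : 0 ≤ c := le_max_right _ _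
    have hQc : Cpos (Q (fun _ _ => c)) :=
      hQmem _ ⟨fun p i => le_max_right _ _, c, fun p i => le_rfl⟩
    obtain ⟨B, hB⟩ := hQc.2
    refine ⟨B, fun y p i => ?_⟩
    have hle : Q (Tr y φ) ≤ Q (fun _ _ => c) := by
      refine hA2 (fun _ => c + 1) (fun i => lt_add_of_le_of_pos hc0 one_pos) _ _
        (fun p i => h0 (p.1, p.2 - y) i)
        (fun p i => le_trans (hb _ i) (le_max_left _ _))
        (fun p i => le_add_of_le_of_nonneg le_rfl zero_le_one)
    exact le_trans (hle _ i) (hB _ i)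
  -- define Qm and Qp
  refine ⟨fun φ p i => ⨅ y : ℝ, S y φ p i, fun φ p i => ⨆ y : ℝ, S y φ p i,
    ?_, ?_, ?_, ?_⟩
  · -- convergence at -∞
    intro φ hφ θ x
    rw [tendsto_pi_nhds]
    intro i
    exact tendsto_atBot_ciInf (fun y y' h => hSmono φ hφ y y' h (θ, x) i)
      ⟨0, by rintro _ ⟨y, rfl⟩; exact hSnonneg φ hφ y (θ, x) i⟩
  · -- convergence at +∞
    intro φ hφ θ x
    rw [tendsto_pi_nhds]
    intro i
    obtain ⟨B, hB⟩ := hSbdd φ hφ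
    exact tendsto_atTop_ciSup (fun y y' h => hSmono φ hφ y y' h (θ, x) i)
      ⟨B, by rintro _ ⟨y, rfl⟩; exact hB y (θ, x) i⟩
  · -- translation invariance
    intro z φ hφ
    have key : ∀ (y : ℝ) (p : M × ℝ) (i : Fin N),
        S y (Tr z φ) p i = S (y + z) φ (p.1, p.2 - z) i := by
      intro y p i
      show Tr (-y) (Q (Tr y (Tr z φ))) p i = Tr (-(y + z)) (Q (Tr (y + z) φ)) (p.1, p.2 - z) i
      rw [hTrTr]
      show Q (Tr (y + z) φ) (p.1, p.2 - -y) i = Q (Tr (y + z) φ) (p.1, p.2 - z - -(y + z)) i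
      congr 2
      ring
    have hrange : ∀ (p : M × ℝ) (i : Fin N),
        Set.range (fun y : ℝ => S (y + z) φ p i) = Set.range (fun y : ℝ => S y φ p i) := by
      intro p i
      exact (Equiv.addRight z).surjective.range_comp (fun y : ℝ => S y φ p i)
    constructor <;> funext p i
    · show (fun i => ⨅ y : ℝ, S y φ (p.1, p.2 - z) i) i = ⨅ y : ℝ, S y (Tr z φ) p i
      simp only [key]
      rw [iInf, iInf, hrange]
    · show (fun i => ⨆ y : ℝ, S y φ (p.1, p.2 - z) i) i = ⨆ y : ℝ, S y (Tr z φ) p i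
      simp only [key]
      rw [iSup, iSup, hrange]
  · -- monotonicity
    intro φ ψ hφ hψ hle
    have hSle : ∀ y, S y φ ≤ S y ψ := by
      intro y
      obtain ⟨b, hb⟩ := hψ.2
      have : Q (Tr y φ) ≤ Q (Tr y ψ) := by
        refine hA2 (fun _ => max b 0 + 1)
          (fun i => lt_add_of_le_of_pos (le_max_right b 0) one_pos) _ _
          (fun p i => hφ.1 (p.1, p.2 - y) i) (hTrmono y _ _ hle)
          (fun p i => le_trans (hb _ i)
            (le_add_of_le_of_nonneg (le_max_left _ _) zero_le_one))
      exact hTrmono (-y) _ _ this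
    constructor <;> intro p i
    · exact ciInf_mono ⟨0, by rintro _ ⟨y, rfl⟩; exact hSnonneg φ hφ y p i⟩
        (fun y => hSle y p i)
    · obtain ⟨B, hB⟩ := hSbdd ψ hψ
      exact ciSup_mono ⟨B, by rintro _ ⟨y, rfl⟩; exact hB y p i⟩
        (fun y => hSle y p i)
end

section
/- Let W, W̃ : ℝ → (0,∞) be C² solutions of d·W'' + k*W − K W² = 0 on (−∞, α*] with W(−∞) = W̃(−∞) = 0 and W'(−∞) = W̃'(−∞) = 0, where d, K > 0 and k* ≤ 0. If W ≥ W̃ on (−∞, α*], W(α*) = W̃(α*), and W'(α*) ≤ W̃'(α*), then W ≡ W̃ on (−∞, α*]. -/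
open Filter Topology

/-- Sturm-type comparison: if `W, W̃` are positive `C²` solutions of
`d W'' + k* W − K W² = 0` on `(−∞, α*]` with vanishing limits of the functions and their
derivatives at `−∞`, `W ≥ W̃` on `(−∞, α*]`, `W(α*) = W̃(α*)` and `W'(α*) ≤ W̃'(α*)`,
then `W ≡ W̃` on `(−∞, α*]`. -/
theorem stmt11 (d K kstar αstar : ℝ) (hd : 0 < d) (hK : 0 < K) (hk : kstar ≤ 0)
    (W W' W'' V V' V'' : ℝ → ℝ)
    (hWd : ∀ x ≤ αstar, HasDerivAt W (W' x) x ∧ HasDerivAt W' (W'' x) x)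
    (hVd : ∀ x ≤ αstar, HasDerivAt V (V' x) x ∧ HasDerivAt V' (V'' x) x)
    (hWpos : ∀ x ≤ αstar, 0 < W x) (hVpos : ∀ x ≤ αstar, 0 < V x)
    (hWeq : ∀ x ≤ αstar, d * W'' x + kstar * W x - K * (W x) ^ 2 = 0)
    (hVeq : ∀ x ≤ αstar, d * V'' x + kstar * V x - K * (V x) ^ 2 = 0)
    (hW0 : Tendsto W atBot (nhds 0)) (hW'0 : Tendsto W' atBot (nhds 0))
    (hV0 : Tendsto V atBot (nhds 0)) (hV'0 : Tendsto V' atBot (nhds 0))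
    (hge : ∀ x ≤ αstar, V x ≤ W x)
    (hbd : W αstar = V αstar) (hbd' : W' αstar ≤ V' αstar) :
    ∀ x ≤ αstar, W x = V x := by
  set G : ℝ → ℝ := fun x => W' x * V x - V' x * W x with hGdef
  have hKd : 0 < K / d := div_pos hK hd
  have hGderiv : ∀ x ≤ αstar, HasDerivAt G (K / d * (W x * V x * (W x - V x))) x := by
    intro x hx
    have h1 := ((hWd x hx).2.mul (hVd x hx).1).sub ((hVd x hx).2.mul (hWd x hx).1)
    convert h1 using 1
    · rfl
    · rfl
    · rfl
    have e1 : W'' x = (K * W x ^ 2 - kstar * W x) / d := by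
      have h := hWeq x hx; field_simp; linarith
    have e2 : V'' x = (K * V x ^ 2 - kstar * V x) / d := by
      have h := hVeq x hx; field_simp; linarith
    rw [e1, e2]; field_simp; ring
  have hGcont : ContinuousOn G (Set.Iic αstar) := fun x hx =>
    ((hGderiv x hx).continuousAt).continuousWithinAt
  have hGmono : MonotoneOn G (Set.Iic αstar) := by
    apply monotoneOn_of_deriv_nonneg (convex_Iic αstar) hGcont
    · intro x hx
      rw [interior_Iic] at hx
      exact ((hGderiv x hx.le).differentiableAt).differentiableWithinAt
    · intro x hx
      rw [interior_Iic] at hx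
      rw [(hGderiv x hx.le).deriv]
      have h1 := (hWpos x hx.le).le
      have h2 := (hVpos x hx.le).le
      have h3 := hge x hx.le
      have : 0 ≤ W x * V x * (W x - V x) :=
        mul_nonneg (mul_nonneg h1 h2) (by linarith)
      positivity
  have hGlim : Tendsto G atBot (nhds 0) := by
    have := (hW'0.mul hV0).sub (hV'0.mul hW0)
    simpa using this
  have hGnonneg : ∀ x ≤ αstar, 0 ≤ G x := by
    intro x hx
    have hev : ∀ᶠ y in atBot, G y ≤ G x := by
      filter_upwards [eventually_le_atBot x] with y hy
      exact hGmono (le_trans hy hx) hx hy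
    exact le_of_tendsto hGlim hev
  have hGα : G αstar ≤ 0 := by
    simp only [hGdef]
    have hVW : V αstar = W αstar := hbd.symm
    rw [hVW]
    nlinarith [mul_nonneg (sub_nonneg.2 hbd') (hWpos αstar le_rfl).le]
  have hGzero : ∀ x ≤ αstar, G x = 0 := by
    intro x hx
    have h1 := hGnonneg x hx
    have h2 : G x ≤ G αstar := hGmono hx Set.self_mem_Iic hx
    linarith
  intro x hx
  rcases eq_or_lt_of_le hx with rfl | hlt
  · exact hbd
  · have hEq : G =ᶠ[nhds x] fun _ => (0 : ℝ) := by
      filter_upwards [Iio_mem_nhds hlt] with y hy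
      exact hGzero y hy.le
    have h0 : HasDerivAt G 0 x := (hasDerivAt_const x (0 : ℝ)).congr_of_eventuallyEq hEq
    have heq0 := (hGderiv x hx).unique h0
    have hW := hWpos x hx
    have hV := hVpos x hx
    have hA : W x * V x * (W x - V x) = 0 := by
      rcases mul_eq_zero.mp heq0 with h | h
      · exact absurd h (ne_of_gt hKd)
      · exact h
    have hWV : 0 < W x * V x := mul_pos hW hV
    rcases mul_eq_zero.mp hA with h | h
    · linarith
    · linarith
end

section
/- Let h₊^∞ : ℝ₊ → ℝ be a KPP nonlinearity with unique positive zero u₊* (h₊^∞(0) = 0, (h₊^∞)'(0) > 0, h₊^∞(u)(u − u₊*) < 0 for u ∈ (0,∞)∖{u₊*}). If ψ : ℝ → (0,∞) is a bounded C² solution of d·ψ'' + h₊^∞(ψ) = 0 on all of ℝ with inf ψ > 0, then ψ ≡ u₊*. -/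
open Set

/-- If `ψ' ≤ -c < 0` on `[x₀,∞)`, then `ψ` cannot be bounded below. -/
lemma kpp_go_down (ψ ψ' : ℝ → ℝ) (hψ : ∀ x, HasDerivAt ψ (ψ' x) x)
    (c x₀ m : ℝ) (hc : 0 < c) (hder : ∀ x, x₀ ≤ x → ψ' x ≤ -c)
    (hm : ∀ x, m ≤ ψ x) : False := by
  have hψc : Continuous ψ := Differentiable.continuous fun x => (hψ x).differentiableAt
  set L : ℝ := (ψ x₀ - m + 1) / c with hLdef
  have hL0 : 0 < L := div_pos (by have := hm x₀; linarith) hc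
  have hdx : ∀ x : ℝ, HasDerivAt (fun x => ψ x + c * x) (ψ' x + c) x := by
    intro x
    have h2 : HasDerivAt (fun x : ℝ => c * x) (c * 1) x := (hasDerivAt_id x).const_mul c
    simpa using (hψ x).fun_add h2
  have hanti : AntitoneOn (fun x => ψ x + c * x) (Ici x₀) := by
    apply antitoneOn_of_deriv_nonpos (convex_Ici x₀)
    · exact (hψc.add (continuous_const.mul continuous_id)).continuousOn
    · intro x hx
      exact ((hdx x).differentiableAt).differentiableWithinAt
    · intro x hx
      rw [(hdx x).deriv]
      rw [interior_Ici] at hx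
      have := hder x (le_of_lt hx)
      linarith
  have h1 : ψ (x₀ + L) + c * (x₀ + L) ≤ ψ x₀ + c * x₀ :=
    hanti (self_mem_Ici) (by simp [Ici]; linarith) (by linarith)
  have hcL : c * L = ψ x₀ - m + 1 := by
    rw [hLdef, mul_div_cancel₀ _ (ne_of_gt hc)]
  have := hm (x₀ + L)
  nlinarith

/-- Escape lemma: with conserved energy `d/2 ψ'² + G(ψ) = E₀`, if `ψ'(x₀) < 0` and
`G ≤ G(ψ x₀)` on `[m, ψ x₀]`, then `ψ` escapes below any lower bound `m`. -/
lemma kpp_escape (d : ℝ) (hd : 0 < d) (ψ ψ' : ℝ → ℝ) (G : ℝ → ℝ) (E₀ m x₀ : ℝ)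
    (hψ : ∀ x, HasDerivAt ψ (ψ' x) x) (hcont : Continuous ψ')
    (hE : ∀ x, d / 2 * (ψ' x) ^ 2 + G (ψ x) = E₀) (hm : ∀ x, m ≤ ψ x)
    (hneg : ψ' x₀ < 0)
    (hGle : ∀ u, m ≤ u → u ≤ ψ x₀ → G u ≤ G (ψ x₀)) : False := by
  have hψc : Continuous ψ := Differentiable.continuous fun x => (hψ x).differentiableAt
  -- Step 1: ψ' stays negative on [x₀, ∞)
  have hstay : ∀ x, x₀ ≤ x → ψ' x < 0 := by
    by_contra hcon
    push_neg at hcon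
    obtain ⟨w, hw1, hw2⟩ := hcon
    set S : Set ℝ := {x | x₀ ≤ x} ∩ {x | 0 ≤ ψ' x} with hSdef
    have hSclosed : IsClosed S :=
      (isClosed_le continuous_const continuous_id).inter
        (isClosed_le continuous_const hcont)
    have hSne : S.Nonempty := ⟨w, hw1, hw2⟩
    have hSbdd : BddBelow S := ⟨x₀, fun y hy => hy.1⟩
    set t : ℝ := sInf S with htdef
    have htS : t ∈ S := hSclosed.csInf_mem hSne hSbdd
    have hx₀t : x₀ < t := by
      rcases lt_or_eq_of_le (show x₀ ≤ t from htS.1) with h' | h'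
      · exact h'
      · exfalso; rw [← h'] at htS; exact absurd htS.2 (not_le.mpr hneg)
    have hlt : ∀ y, x₀ ≤ y → y < t → ψ' y < 0 := by
      intro y hy1 hy2
      by_contra hy3
      push_neg at hy3
      exact absurd (csInf_le hSbdd ⟨hy1, hy3⟩) (not_le.mpr hy2)
    have hψ't_le : ψ' t ≤ 0 := by
      have htend : Filter.Tendsto ψ' (nhdsWithin t (Iio t)) (nhds (ψ' t)) :=
        (hcont.continuousAt.tendsto).mono_left nhdsWithin_le_nhds
      refine le_of_tendsto htend ?_
      have : Ioo x₀ t ∈ nhdsWithin t (Iio t) :=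
        Ioo_mem_nhdsLT_of_mem ⟨hx₀t, le_refl t⟩
      filter_upwards [this] with y hy
      exact le_of_lt (hlt y hy.1.le hy.2)
    have hψ't : ψ' t = 0 := le_antisymm hψ't_le htS.2
    have hanti : AntitoneOn ψ (Icc x₀ t) := by
      apply antitoneOn_of_deriv_nonpos (convex_Icc x₀ t) hψc.continuousOn
      · intro x hx; exact (hψ x).differentiableAt.differentiableWithinAt
      · intro x hx
        rw [interior_Icc] at hx
        rw [(hψ x).deriv]
        exact le_of_lt (hlt x hx.1.le hx.2)
    have hψt_le : ψ t ≤ ψ x₀ :=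
      hanti (left_mem_Icc.mpr hx₀t.le) (right_mem_Icc.mpr hx₀t.le) hx₀t.le
    have e1 := hE t
    have e2 := hE x₀
    have e3 := hGle (ψ t) (hm t) hψt_le
    rw [hψ't] at e1
    have hsq : 0 < (ψ' x₀) ^ 2 := by nlinarith
    nlinarith
  -- Step 2: ψ ≤ ψ x₀ and ψ' ≤ ψ' x₀ on [x₀, ∞)
  have hanti2 : AntitoneOn ψ (Ici x₀) := by
    apply antitoneOn_of_deriv_nonpos (convex_Ici x₀) hψc.continuousOn
    · intro x hx; exact (hψ x).differentiableAt.differentiableWithinAt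
    · intro x hx
      rw [interior_Ici] at hx
      rw [(hψ x).deriv]
      exact le_of_lt (hstay x hx.le)
  have hspeed : ∀ x, x₀ ≤ x → ψ' x ≤ ψ' x₀ := by
    intro x hx
    have hψx_le : ψ x ≤ ψ x₀ := hanti2 self_mem_Ici hx hx
    have e1 := hE x
    have e2 := hE x₀
    have e3 := hGle (ψ x) (hm x) hψx_le
    have h4 := hstay x hx
    have e4 : (ψ' x₀) ^ 2 ≤ (ψ' x) ^ 2 := by
      have h5 : d / 2 * (ψ' x₀) ^ 2 ≤ d / 2 * (ψ' x) ^ 2 := by linarith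
      exact (mul_le_mul_iff_right₀ (by linarith : (0:ℝ) < d / 2)).mp h5
    nlinarith [e4]
  exact kpp_go_down ψ ψ' hψ (-ψ' x₀) x₀ m (by linarith)
    (fun x hx => by have := hspeed x hx; linarith) hm

/-- Variant where only `ψ' x₀ ≠ 0` is assumed (handles both directions of `x`). -/
lemma kpp_escape' (d : ℝ) (hd : 0 < d) (ψ ψ' : ℝ → ℝ) (G : ℝ → ℝ) (E₀ m x₀ : ℝ)
    (hψ : ∀ x, HasDerivAt ψ (ψ' x) x) (hcont : Continuous ψ')
    (hE : ∀ x, d / 2 * (ψ' x) ^ 2 + G (ψ x) = E₀) (hm : ∀ x, m ≤ ψ x)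
    (hne : ψ' x₀ ≠ 0)
    (hGle : ∀ u, m ≤ u → u ≤ ψ x₀ → G u ≤ G (ψ x₀)) : False := by
  rcases lt_or_gt_of_ne hne with hlt | hgt
  · exact kpp_escape d hd ψ ψ' G E₀ m x₀ hψ hcont hE hm hlt hGle
  · -- reflect x
    have hφ : ∀ x : ℝ, HasDerivAt (fun x => ψ (-x)) (-ψ' (-x)) x := by
      intro x
      have := ((hψ (-x)).comp x (hasDerivAt_neg x))
      simpa [Function.comp_def] using this
    apply kpp_escape d hd (fun x => ψ (-x)) (fun x => -ψ' (-x)) G E₀ m (-x₀) hφ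
      (hcont.comp continuous_neg).neg
      (fun x => by simpa using hE (-x)) (fun x => hm (-x))
      (by simpa using hgt)
      (fun u hu1 hu2 => by simpa using hGle u hu1 (by simpa using hu2))

/-- If `|ψ'| ≥ c > 0` everywhere, then `ψ` cannot be bounded below. -/
lemma kpp_const_speed (ψ ψ' : ℝ → ℝ) (hψ : ∀ x, HasDerivAt ψ (ψ' x) x)
    (hcont : Continuous ψ') (c m : ℝ) (hc : 0 < c)
    (hsp : ∀ x, c ≤ |ψ' x|) (hm : ∀ x, m ≤ ψ x) : False := by
  have hne : ∀ x, ψ' x ≠ 0 := by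
    intro x hx
    have := hsp x
    rw [hx] at this
    simp at this
    linarith
  have hsame : (∀ x, ψ' x < 0) ∨ (∀ x, 0 < ψ' x) := by
    rcases lt_or_gt_of_ne (hne 0) with h0 | h0
    · left
      intro x
      by_contra hx
      push_neg at hx
      have h0x : (0:ℝ) ∈ uIcc (ψ' 0) (ψ' x) := by
        rw [mem_uIcc]; left; exact ⟨h0.le, hx⟩
      obtain ⟨z, _, hz⟩ := intermediate_value_uIcc hcont.continuousOn h0x
      exact hne z hz
    · right
      intro x
      by_contra hx
      push_neg at hx
      have h0x : (0:ℝ) ∈ uIcc (ψ' 0) (ψ' x) := by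
        rw [mem_uIcc]; right; exact ⟨hx, h0.le⟩
      obtain ⟨z, _, hz⟩ := intermediate_value_uIcc hcont.continuousOn h0x
      exact hne z hz
  rcases hsame with hall | hall
  · refine kpp_go_down ψ ψ' hψ c 0 m hc (fun x _ => ?_) hm
    have h1 := hsp x
    have h2 := hall x
    rw [abs_of_neg h2] at h1
    linarith
  · have hφ : ∀ x : ℝ, HasDerivAt (fun x => ψ (-x)) (-ψ' (-x)) x := by
      intro x
      simpa [Function.comp_def] using ((hψ (-x)).comp x (hasDerivAt_neg x))
    refine kpp_go_down (fun x => ψ (-x)) (fun x => -ψ' (-x)) hφ c 0 m hc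
      (fun x _ => ?_) (fun x => hm (-x))
    have h1 := hsp (-x)
    have h2 := hall (-x)
    rw [abs_of_pos h2] at h1
    show -ψ' (-x) ≤ -c
    linarith

/-- KPP rigidity: if `h` is a KPP nonlinearity with unique positive zero `u₊*`
(`h(0) = 0`, `h'(0) > 0`, `h(u)(u − u₊*) < 0` for `u ∈ (0,∞)∖{u₊*}`), and `ψ` is a
bounded entire positive `C²` solution of `d ψ'' + h(ψ) = 0` on `ℝ` with `inf ψ > 0`,
then `ψ ≡ u₊*`. -/
theorem stmt12 (d ustar : ℝ) (hd : 0 < d) (hu : 0 < ustar)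
    (h : ℝ → ℝ) (hC1 : ContDiffOn ℝ 1 h (Set.Ici (0:ℝ)))
    (h0 : h 0 = 0) (h'0 : 0 < derivWithin h (Set.Ici (0:ℝ)) 0)
    (hsign : ∀ u : ℝ, 0 < u → u ≠ ustar → h u * (u - ustar) < 0)
    (ψ ψ' ψ'' : ℝ → ℝ)
    (hψd : ∀ x : ℝ, HasDerivAt ψ (ψ' x) x ∧ HasDerivAt ψ' (ψ'' x) x)
    (heq : ∀ x : ℝ, d * ψ'' x + h (ψ x) = 0)
    (hbdd : ∃ B : ℝ, ∀ x : ℝ, ψ x ≤ B)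
    (hinf : ∃ m : ℝ, 0 < m ∧ ∀ x : ℝ, m ≤ ψ x) :
    ∀ x : ℝ, ψ x = ustar := by
  obtain ⟨B, hB⟩ := hbdd
  obtain ⟨m, hm0, hm⟩ := hinf
  have hψ : ∀ x, HasDerivAt ψ (ψ' x) x := fun x => (hψd x).1
  have hψ'c : Continuous ψ' :=
    Differentiable.continuous fun x => (hψd x).2.differentiableAt
  have hψpos : ∀ x, 0 < ψ x := fun x => lt_of_lt_of_le hm0 (hm x)
  -- sign facts for h
  have hpos : ∀ y : ℝ, 0 < y → y < ustar → 0 < h y := by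
    intro y hy1 hy2
    have := hsign y hy1 (ne_of_lt hy2)
    nlinarith
  have hneg : ∀ y : ℝ, ustar < y → h y < 0 := by
    intro y hy
    have := hsign y (lt_trans hu hy) (ne_of_gt hy)
    nlinarith
  -- continuity of h on positive reals
  have hhcont : ∀ u : ℝ, 0 < u → ContinuousAt h u := fun u hu' =>
    hC1.continuousOn.continuousAt (Ici_mem_nhds hu')
  -- the potential G
  set G : ℝ → ℝ := fun u => ∫ t in ustar..u, h t with hGdef
  have hG : ∀ u : ℝ, 0 < u → HasDerivAt G (h u) u := by
    intro u hu'
    have hsub : uIcc ustar u ⊆ Ici (0:ℝ) := by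
      intro y hy
      rcases le_total ustar u with hc | hc
      · rw [uIcc_of_le hc] at hy; exact le_trans hu.le hy.1
      · rw [uIcc_of_ge hc] at hy; exact le_trans hu'.le hy.1
    have hint : IntervalIntegrable h MeasureTheory.volume ustar u :=
      (hC1.continuousOn.mono hsub).intervalIntegrable
    have hmeas : StronglyMeasurableAtFilter h (nhds u) :=
      (hC1.continuousOn.mono (Ioi_subset_Ici le_rfl : Ioi (0:ℝ) ⊆ Ici 0)).stronglyMeasurableAtFilter
        isOpen_Ioi u hu'
    exact intervalIntegral.integral_hasDerivAt_right hint hmeas (hhcont u hu')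
  -- conserved energy
  set E : ℝ → ℝ := fun x => d / 2 * (ψ' x) ^ 2 + G (ψ x) with hEdef
  have hEderiv : ∀ x : ℝ, HasDerivAt E 0 x := by
    intro x
    have h1 : HasDerivAt (fun x => (ψ' x) ^ 2) (2 * ψ' x * ψ'' x) x := by
      have := (hψd x).2.fun_pow 2
      simpa using this
    have h2 : HasDerivAt (fun x => G (ψ x)) (h (ψ x) * ψ' x) x :=
      (hG (ψ x) (hψpos x)).comp x (hψ x)
    have h3 : HasDerivAt E (d / 2 * (2 * ψ' x * ψ'' x) + h (ψ x) * ψ' x) x :=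
      (h1.const_mul (d / 2)).add h2
    have h4 : d / 2 * (2 * ψ' x * ψ'' x) + h (ψ x) * ψ' x = 0 := by
      have := heq x
      linear_combination ψ' x * this
    rwa [h4] at h3
  obtain ⟨E₀, hE⟩ : ∃ E₀ : ℝ, ∀ x : ℝ, d / 2 * (ψ' x) ^ 2 + G (ψ x) = E₀ := by
    refine ⟨E 0, fun x => ?_⟩
    have := is_const_of_deriv_eq_zero (f := E)
      (fun y => (hEderiv y).differentiableAt) (fun y => (hEderiv y).deriv) x 0
    simpa [hEdef] using this
  clear_value G
  clear hGdef hEdef hEderiv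
  -- monotonicity of G
  have GltLow : ∀ u a : ℝ, 0 < u → u < a → a ≤ ustar → G u < G a := by
    intro u a hu1 hu2 ha
    have hmono : StrictMonoOn G (Icc u a) := by
      apply strictMonoOn_of_deriv_pos (convex_Icc u a)
      · intro y hy
        exact ((hG y (lt_of_lt_of_le hu1 hy.1)).continuousAt).continuousWithinAt
      · intro y hy
        rw [interior_Icc] at hy
        rw [(hG y (lt_trans hu1 hy.1)).deriv]
        exact hpos y (lt_trans hu1 hy.1) (lt_of_lt_of_le hy.2 ha)
    exact hmono (left_mem_Icc.mpr hu2.le) (right_mem_Icc.mpr hu2.le) hu2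
  have GltHigh : ∀ a u : ℝ, ustar ≤ a → a < u → G u < G a := by
    intro a u ha hu'
    have hanti : StrictAntiOn G (Icc a u) := by
      apply strictAntiOn_of_deriv_neg (convex_Icc a u)
      · intro y hy
        exact ((hG y (lt_of_lt_of_le hu (le_trans ha hy.1))).continuousAt).continuousWithinAt
      · intro y hy
        rw [interior_Icc] at hy
        rw [(hG y (lt_trans hu (lt_of_le_of_lt ha hy.1))).deriv]
        exact hneg y (lt_of_le_of_lt ha hy.1)
    exact hanti (left_mem_Icc.mpr hu'.le) (right_mem_Icc.mpr hu'.le) hu'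
  have Gmax : ∀ u : ℝ, 0 < u → u ≠ ustar → G u < G ustar := by
    intro u hu1 hu2
    rcases lt_or_gt_of_ne hu2 with hlt | hgt
    · exact GltLow u ustar hu1 hlt le_rfl
    · exact GltHigh ustar u le_rfl hgt
  have GleStar : ∀ u : ℝ, 0 < u → G u ≤ G ustar := by
    intro u hu1
    by_cases hcase : u = ustar
    · rw [hcase]
    · exact (Gmax u hu1 hcase).le
  -- key: a point with ψ ≠ ustar and ψ' ≠ 0 yields a contradiction
  have key : ∀ x₂ : ℝ, ψ x₂ ≠ ustar → ψ' x₂ ≠ 0 → False := by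
    intro x₂ hneu hne0
    rcases lt_or_gt_of_ne hneu with hlt | hgt
    · refine kpp_escape' d hd ψ ψ' G E₀ m x₂ hψ hψ'c hE hm hne0 ?_
      intro u hu1 hu2
      rcases eq_or_lt_of_le hu2 with hc | hc
      · rw [hc]
      · exact (GltLow u (ψ x₂) (lt_of_lt_of_le hm0 hu1) hc hlt.le).le
    · -- reflect in u
      have hχ : ∀ x : ℝ, HasDerivAt (fun x => -ψ x) (-ψ' x) x := fun x => (hψ x).neg
      refine kpp_escape' d hd (fun x => -ψ x) (fun x => -ψ' x) (fun v => G (-v)) E₀ (-B) x₂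
        hχ hψ'c.neg (fun x => by simpa using hE x) (fun x => neg_le_neg (hB x))
        (by simpa using hne0) ?_
      intro v hv1 hv2
      simp only [neg_neg]
      have hv2'' : v ≤ -ψ x₂ := by simpa using hv2
      have hv2' : ψ x₂ ≤ -v := by linarith
      rcases eq_or_lt_of_le hv2' with hc | hc
      · rw [← hc]
      · exact (GltHigh (ψ x₂) (-v) hgt.le hc).le
  -- main case analysis on the energy level
  intro x₁
  by_contra hne
  rcases lt_trichotomy E₀ (G ustar) with hE₀ | hE₀ | hE₀
  · -- low energy: ψ never touches ustar; ψ' cannot vanish identically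
    by_cases hzero : ∀ x, ψ' x = 0
    · have hc : HasDerivAt ψ' (ψ'' x₁) x₁ := (hψd x₁).2
      have hc0 : HasDerivAt (fun _ : ℝ => (0:ℝ)) (ψ'' x₁) x₁ := by
        have : ψ' = fun _ => (0:ℝ) := funext hzero
        rwa [this] at hc
      have hψ''0 : ψ'' x₁ = 0 := hc0.unique (hasDerivAt_const x₁ 0)
      have := heq x₁
      rw [hψ''0] at this
      have hh0 : h (ψ x₁) = 0 := by linarith
      have := hsign (ψ x₁) (hψpos x₁) hne
      rw [hh0] at this
      linarith
    · push_neg at hzero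
      obtain ⟨x₂, hx₂⟩ := hzero
      have hx₂ne : ψ x₂ ≠ ustar := by
        intro hcon
        have := hE x₂
        rw [hcon] at this
        have hq : 0 ≤ d * ψ' x₂ ^ 2 := mul_nonneg hd.le (sq_nonneg _)
        linarith
      exact key x₂ hx₂ne hx₂
  · -- critical energy: ψ'(x₁) ≠ 0 since ψ(x₁) ≠ ustar
    have hGlt := Gmax (ψ x₁) (hψpos x₁) hne
    have hne0 : ψ' x₁ ≠ 0 := by
      intro hcon
      have := hE x₁
      rw [hcon] at this
      simp at this
      linarith
    exact key x₁ hne hne0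
  · -- high energy: |ψ'| bounded below, ψ unbounded
    set c : ℝ := Real.sqrt (2 / d * (E₀ - G ustar)) with hcdef
    have hfac : 0 < 2 / d * (E₀ - G ustar) := by
      apply mul_pos (by positivity)
      linarith
    have hc : 0 < c := Real.sqrt_pos.mpr hfac
    have hsp : ∀ x, c ≤ |ψ' x| := by
      intro x
      have h1 : G (ψ x) ≤ G ustar := GleStar (ψ x) (hψpos x)
      have h2 := hE x
      have h4 : E₀ - G ustar ≤ d / 2 * (ψ' x) ^ 2 := by linarith
      have h3 : 2 / d * (E₀ - G ustar) ≤ (ψ' x) ^ 2 := by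
        calc 2 / d * (E₀ - G ustar) ≤ 2 / d * (d / 2 * (ψ' x) ^ 2) :=
              mul_le_mul_of_nonneg_left h4 (by positivity)
          _ = (ψ' x) ^ 2 := by field_simp
      calc c ≤ Real.sqrt ((ψ' x) ^ 2) := Real.sqrt_le_sqrt h3
        _ = |ψ' x| := Real.sqrt_sq_eq_abs _
    exact kpp_const_speed ψ ψ' hψ hψ'c c m hc hsp hm
end
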